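/- Let F be an algebraically closed field of characteristic zero and let f ∈ F[X] be a nonzero polynomial. If the derivative f' divides f² and f(0) = 0, then f is a monomial: f = a·X^d for some a ∈ F and d ∈ ℕ. -/

import Mathlib

open Polynomial

theorem monomial_of_derivative_dvd_sq {F : Type*} [Field F] [IsAlgClosed F] [CharZero F]
    (f : F[X]) (hf : f ≠ 0) (hdvd : f.derivative ∣ f ^ 2) (h0 : f.eval 0 = 0) :
    ∃ (a : F) (d : ℕ), f = C a * X ^ d := by
  classical
  -- natDegree ≥ 1
  have hn : 1 ≤ f.natDegree := by
    by_contra h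
    push_neg at h
    obtain ⟨x, hx⟩ := Polynomial.natDegree_eq_zero.mp (Nat.lt_one_iff.mp h)
    rw [← hx] at h0 hf
    simp at h0
    exact hf (by rw [h0, map_zero])
  have hf' : f.derivative ≠ 0 := fun h =>
    absurd (Polynomial.natDegree_eq_zero_of_derivative_eq_zero h) (by omega)
  set n := f.natDegree with hnn
  -- root cards
  have hcard : f.roots.card = n :=
    Polynomial.splits_iff_card_roots.mp (IsAlgClosed.splits f)
  have hcard' : f.derivative.roots.card = n - 1 := by
    rw [Polynomial.splits_iff_card_roots.mp (IsAlgClosed.splits f.derivative)]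
    exact Polynomial.natDegree_eq_of_degree_eq_some (Polynomial.degree_derivative_eq f hn)
  -- roots of f' among roots of f
  have hle : f.derivative.roots ≤ (f ^ 2).roots :=
    Polynomial.roots.le_of_dvd (pow_ne_zero 2 hf) hdvd
  have hsub : f.derivative.roots.toFinset ⊆ f.roots.toFinset := by
    rw [← f.roots.toFinset_nsmul 2 (by norm_num), ← Polynomial.roots_pow]
    exact Multiset.toFinset_subset.mpr (Multiset.subset_of_le hle)
  -- count in f' = count in f - 1 on roots of f
  have hcnt : ∀ r ∈ f.roots.toFinset, f.derivative.roots.count r = f.roots.count r - 1 := by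
    intro r hr
    rw [Polynomial.count_roots, Polynomial.count_roots,
      Polynomial.derivative_rootMultiplicity_of_root]
    exact Polynomial.isRoot_of_mem_roots (Multiset.mem_toFinset.mp hr)
  -- 0 is a root
  have h0r : (0 : F) ∈ f.roots.toFinset :=
    Multiset.mem_toFinset.mpr ((Polynomial.mem_roots hf).mpr h0)
  -- counting
  set k := f.roots.toFinset.card with hk
  have hsum : ∑ r ∈ f.roots.toFinset, f.roots.count r = n := by
    rw [Multiset.toFinset_sum_count_eq, hcard]
  have hsum' : ∑ r ∈ f.roots.toFinset, f.derivative.roots.count r = n - 1 := by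
    rw [← hcard', ← Multiset.toFinset_sum_count_eq]
    exact (Finset.sum_subset hsub (fun x _ hx =>
      Multiset.count_eq_zero.mpr (fun h => hx (Multiset.mem_toFinset.mpr h)))).symm
  have hpos : ∀ r ∈ f.roots.toFinset, 1 ≤ f.roots.count r := fun r hr =>
    Multiset.one_le_count_iff_mem.mpr (Multiset.mem_toFinset.mp hr)
  have hksum : (∑ r ∈ f.roots.toFinset, f.derivative.roots.count r) + k
      = ∑ r ∈ f.roots.toFinset, f.roots.count r := by
    rw [hk, Finset.card_eq_sum_ones, ← Finset.sum_add_distrib]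
    exact Finset.sum_congr rfl (fun r hr => by
      have h1 := hcnt r hr; have h2 := hpos r hr; omega)
  have hk1 : k = 1 := by
    have hkpos : 1 ≤ k := Finset.card_pos.mpr ⟨0, h0r⟩
    omega
  -- toFinset = {0}
  have hsingle : f.roots.toFinset = {0} := by
    obtain ⟨a, ha⟩ := Finset.card_eq_one.mp hk1
    rw [ha] at h0r ⊢
    rw [Finset.mem_singleton.mp h0r]
  have hrep : f.roots = Multiset.replicate n 0 := by
    rw [Multiset.eq_replicate]
    refine ⟨hcard, fun b hb => ?_⟩
    have := Multiset.mem_toFinset.mpr hb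
    rw [hsingle, Finset.mem_singleton] at this
    exact this
  refine ⟨f.leadingCoeff, n, ?_⟩
  have := (IsAlgClosed.splits f).eq_prod_roots
  rw [hrep] at this
  simpa using this
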